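/- arXiv:0801.1617 — 6 statements merged into one kernel-verified Lean document; each statement's English description precedes it below -/
import Mathlib

section
/- Let Z:[0,z]→ℝ be non-increasing and concave, and let k be a natural number with 2π(k+1) ≤ z. Then ∫_{2πk}^{2π(k+1)} Z(t)cos(t) dt ≤ 0. -/
open Real Set intervalIntegral

lemma concave_inner_sum {S : Set ℝ} {f : ℝ → ℝ} (hf : ConcaveOn ℝ S f)
    {x u v y : ℝ} (hx : x ∈ S) (hy : y ∈ S)
    (hxu : x ≤ u) (huv : u ≤ v) (hvy : v ≤ y) (hsum : x + y = u + v) :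
    f x + f y ≤ f u + f v := by
  rcases eq_or_lt_of_le (hxu.trans (huv.trans hvy)) with h | h
  · have hux : u = x := le_antisymm (by linarith) hxu
    have hvx : v = x := le_antisymm (by linarith) (hxu.trans huv)
    rw [hux, hvx, ← h]
  · set θ : ℝ := (y - u) / (y - x) with hθdef
    have hyx : 0 < y - x := by linarith
    have hθ0 : 0 ≤ θ := div_nonneg (by linarith) hyx.le
    have hθ1 : θ ≤ 1 := by
      rw [div_le_one hyx]; linarith
    have hu' : θ * x + (1 - θ) * y = u := by
      rw [hθdef]; field_simp [hyx.ne']; ring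
    have hv' : (1 - θ) * x + θ * y = v := by
      have : v = x + y - u := by linarith
      rw [this, hθdef]; field_simp [hyx.ne']; ring
    have h1 := hf.2 hx hy hθ0 (by linarith : (0:ℝ) ≤ 1 - θ) (by ring)
    have h2 := hf.2 hx hy (by linarith : (0:ℝ) ≤ 1 - θ) hθ0 (by ring)
    simp only [smul_eq_mul] at h1 h2
    rw [hu'] at h1
    rw [hv'] at h2
    nlinarith

set_option maxHeartbeats 1000000 in
theorem stmt_0 (z : ℝ) (Z : ℝ → ℝ) (k : ℕ)
    (hanti : AntitoneOn Z (Set.Icc 0 z))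
    (hconc : ConcaveOn ℝ (Set.Icc 0 z) Z)
    (hz : 2 * π * (k + 1) ≤ z) :
    ∫ t in (2 * π * k)..(2 * π * (k + 1)), Z t * Real.cos t ≤ 0 := by
  have hπ := Real.pi_pos
  have hk : (0:ℝ) ≤ k := Nat.cast_nonneg k
  set a : ℝ := 2 * π * k with ha
  have hza : a + 2 * π ≤ z := by rw [ha]; linarith [hz]
  have ha0 : 0 ≤ a := by positivity
  -- membership helper
  have hmem : ∀ u : ℝ, 0 ≤ u → u ≤ 2 * π → a + u ∈ Set.Icc 0 z := by
    intro u h1 h2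
    exact ⟨by linarith, by linarith⟩
  -- set f
  set f : ℝ → ℝ := fun u => Z (a + u) * Real.cos u with hfdef
  -- cos (a + u) = cos u
  have hcos : ∀ u : ℝ, Real.cos (a + u) = Real.cos u := by
    intro u
    rw [add_comm, ha, show 2 * π * (k:ℝ) = (k:ℝ) * (2 * π) by ring]
    exact Real.cos_add_nat_mul_two_pi u k
  -- rewrite goal
  have hgoal : (∫ t in (2 * π * k)..(2 * π * (k + 1)), Z t * Real.cos t)
      = ∫ u in (0:ℝ)..(2 * π), f u := by
    have := intervalIntegral.integral_comp_add_left (fun t => Z t * Real.cos t) a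
      (a := (0:ℝ)) (b := 2 * π)
    rw [show a + (0:ℝ) = 2 * π * k by rw [ha]; ring,
        show a + 2 * π = 2 * π * ((k:ℝ) + 1) by rw [ha]; ring] at this
    rw [← this]
    refine intervalIntegral.integral_congr fun u _ => ?_
    simp [hfdef, hcos u]
  rw [hgoal]
  -- integrability of f on [0, 2π]
  have hZ' : AntitoneOn (fun u => Z (a + u)) (Set.uIcc 0 (2 * π)) := by
    intro x hx y hy hxy
    rw [Set.uIcc_of_le (by linarith : (0:ℝ) ≤ 2 * π)] at hx hy
    exact hanti (hmem x hx.1 hx.2) (hmem y hy.1 hy.2) (by linarith)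
  have hf : IntervalIntegrable f MeasureTheory.volume 0 (2 * π) :=
    hZ'.intervalIntegrable.mul_continuousOn Real.continuous_cos.continuousOn
  have hsub : ∀ c d : ℝ, 0 ≤ c → c ≤ d → d ≤ 2 * π →
      IntervalIntegrable f MeasureTheory.volume c d := by
    intro c d h1 h2 h3
    refine hf.mono_set ?_
    rw [Set.uIcc_of_le h2, Set.uIcc_of_le (by linarith : (0:ℝ) ≤ 2 * π)]
    exact Set.Icc_subset_Icc h1 h3
  have h01 : IntervalIntegrable f MeasureTheory.volume 0 (π / 2) := hsub 0 (π/2) le_rfl (by linarith) (by linarith)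
  have h12 : IntervalIntegrable f MeasureTheory.volume (π / 2) π := hsub _ _ (by linarith) (by linarith) (by linarith)
  have h23 : IntervalIntegrable f MeasureTheory.volume π (π + π / 2) := hsub _ _ (by linarith) (by linarith) (by linarith)
  have h34 : IntervalIntegrable f MeasureTheory.volume (π + π / 2) (2 * π) := hsub _ _ (by linarith) (by linarith) (by linarith)
  -- split
  have hsplit : (∫ u in (0:ℝ)..(2 * π), f u)
      = (∫ u in (0:ℝ)..(π / 2), f u) + (∫ u in (π / 2)..π, f u)
        + (∫ u in π..(π + π / 2), f u) + (∫ u in (π + π / 2)..(2 * π), f u) := by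
    rw [← intervalIntegral.integral_add_adjacent_intervals (h01.trans h12) (h23.trans h34),
        ← intervalIntegral.integral_add_adjacent_intervals h01 h12,
        ← intervalIntegral.integral_add_adjacent_intervals h23 h34]
    ring
  -- substitutions
  have e2 : (∫ s in (0:ℝ)..(π / 2), f (π - s)) = ∫ u in (π / 2)..π, f u := by
    rw [intervalIntegral.integral_comp_sub_left f π, show π - π / 2 = π / 2 by ring, sub_zero]
  have e3 : (∫ s in (0:ℝ)..(π / 2), f (π + s)) = ∫ u in π..(π + π / 2), f u := by
    rw [intervalIntegral.integral_comp_add_left f π, add_zero]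
  have e4 : (∫ s in (0:ℝ)..(π / 2), f (2 * π - s)) = ∫ u in (π + π / 2)..(2 * π), f u := by
    rw [intervalIntegral.integral_comp_sub_left f (2 * π),
      show 2 * π - π / 2 = π + π / 2 by ring, sub_zero]
  -- integrability of substituted pieces on [0, π/2]
  have i2 : IntervalIntegrable (fun s => f (π - s)) MeasureTheory.volume 0 (π / 2) := by
    have h' : IntervalIntegrable (fun s => f (π - s)) MeasureTheory.volume (π - π / 2) (π - π) :=
      h12.comp_sub_left π
    simpa [show π - π / 2 = π / 2 by ring] using h'.symm
  have i3 : IntervalIntegrable (fun s => f (π + s)) MeasureTheory.volume 0 (π / 2) := by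
    have h' : IntervalIntegrable (fun s => f (π + s)) MeasureTheory.volume (π - π) (π + π / 2 - π) :=
      h23.comp_add_left π
    simpa [show π + π / 2 - π = π / 2 by ring] using h'
  have i4 : IntervalIntegrable (fun s => f (2 * π - s)) MeasureTheory.volume 0 (π / 2) := by
    have h' : IntervalIntegrable (fun s => f (2 * π - s)) MeasureTheory.volume
        (2 * π - (π + π / 2)) (2 * π - 2 * π) := h34.comp_sub_left (2 * π)
    simpa [show 2 * π - (π + π / 2) = π / 2 by ring] using h'.symm
  -- combine into one integral
  have hcomb : (∫ u in (0:ℝ)..(2 * π), f u)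
      = ∫ s in (0:ℝ)..(π / 2), (f s + f (π - s) + f (π + s) + f (2 * π - s)) := by
    rw [hsplit, ← e2, ← e3, ← e4,
        ← intervalIntegral.integral_add h01 i2,
        ← intervalIntegral.integral_add (h01.add i2) i3,
        ← intervalIntegral.integral_add ((h01.add i2).add i3) i4]
  rw [hcomb]
  -- pointwise nonpositivity
  have hpt : ∀ s ∈ Set.Icc (0:ℝ) (π / 2),
      f s + f (π - s) + f (π + s) + f (2 * π - s) ≤ 0 := by
    intro s hs
    obtain ⟨hs0, hs1⟩ := hs
    have hcs : 0 ≤ Real.cos s := Real.cos_nonneg_of_mem_Icc ⟨by linarith, hs1⟩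
    have hkey : Z (a + s) + Z (a + (2 * π - s)) ≤ Z (a + (π - s)) + Z (a + (π + s)) := by
      refine concave_inner_sum hconc (hmem s hs0 (by linarith))
        (hmem (2 * π - s) (by linarith) (by linarith))
        (by linarith) (by linarith) (by linarith) (by ring)
    have hceq : f s + f (π - s) + f (π + s) + f (2 * π - s)
        = Real.cos s * (Z (a + s) - Z (a + (π - s)) - Z (a + (π + s)) + Z (a + (2 * π - s))) := by
      simp only [hfdef]
      rw [Real.cos_pi_sub, show π + s = s + π by ring, Real.cos_add_pi,
          show 2 * π - s = -s + (1:ℕ) * (2 * π) by push_cast; ring,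
          Real.cos_add_nat_mul_two_pi, Real.cos_neg]
      ring
    rw [hceq]
    exact mul_nonpos_of_nonneg_of_nonpos hcs (by linarith)
  -- conclude
  have hneg := intervalIntegral.integral_nonneg (μ := MeasureTheory.volume)
    (f := fun s => -(f s + f (π - s) + f (π + s) + f (2 * π - s)))
    (by linarith : (0:ℝ) ≤ π / 2) (fun u hu => neg_nonneg.mpr (hpt u hu))
  rw [intervalIntegral.integral_neg] at hneg
  linarith
end

section
/- Let Z:[0,z]→ℝ be non-increasing and concave, and let k be a natural number with 2π(k+3/2) ≤ z. Then ∫_{2π(k+1/2)}^{2π(k+3/2)} Z(t)cos(t) dt ≥ 0. -/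
open Real Set intervalIntegral

lemma concave_pair {z : ℝ} {Z : ℝ → ℝ} (hconc : ConcaveOn ℝ (Set.Icc 0 z) Z)
    {m s₁ s₂ : ℝ} (h0 : 0 ≤ s₁) (h12 : s₁ ≤ s₂) (hs2 : 0 < s₂)
    (hx : m - s₂ ∈ Set.Icc 0 z) (hy : m + s₂ ∈ Set.Icc 0 z) :
    Z (m - s₂) + Z (m + s₂) ≤ Z (m - s₁) + Z (m + s₁) := by
  set a := (s₂ + s₁) / (2 * s₂) with ha
  set b := (s₂ - s₁) / (2 * s₂) with hb
  have hane : 0 ≤ a := div_nonneg (by linarith) (by linarith)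
  have hbne : 0 ≤ b := div_nonneg (by linarith) (by linarith)
  have hab : a + b = 1 := by rw [ha, hb]; field_simp; ring
  have e1 : a * (m - s₂) + b * (m + s₂) = m - s₁ := by rw [ha, hb]; field_simp; ring
  have e2 : b * (m - s₂) + a * (m + s₂) = m + s₁ := by rw [ha, hb]; field_simp; ring
  have h1 := hconc.2 hx hy hane hbne hab
  have h2 := hconc.2 hx hy hbne hane (by linarith)
  simp only [smul_eq_mul] at h1 h2
  rw [e1] at h1
  rw [e2] at h2
  calc Z (m - s₂) + Z (m + s₂) = (a + b) * (Z (m - s₂) + Z (m + s₂)) := by rw [hab, one_mul]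
    _ = a * Z (m - s₂) + b * Z (m + s₂) + (b * Z (m - s₂) + a * Z (m + s₂)) := by ring
    _ ≤ Z (m - s₁) + Z (m + s₁) := add_le_add h1 h2

theorem stmt_1 (z : ℝ) (Z : ℝ → ℝ) (k : ℕ)
    (hanti : AntitoneOn Z (Set.Icc 0 z))
    (hconc : ConcaveOn ℝ (Set.Icc 0 z) Z)
    (hz : 2 * π * (k + 3/2) ≤ z) :
    0 ≤ ∫ t in (2 * π * (k + 1/2))..(2 * π * (k + 3/2)), Z t * Real.cos t := by
  have hπ := Real.pi_pos
  have hk : (0:ℝ) ≤ k := Nat.cast_nonneg k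
  set m : ℝ := 2 * π * (k + 1) with hm
  have hlo : 0 ≤ m - π := by rw [hm]; nlinarith
  have hhi : m + π ≤ z := by rw [hm]; nlinarith
  have hmem : ∀ t : ℝ, m - π ≤ t → t ≤ m + π → t ∈ Set.Icc 0 z :=
    fun t h1 h2 => ⟨by linarith, by linarith⟩
  have hb1 : 2 * π * ((k:ℝ) + 1/2) = m - π := by rw [hm]; ring
  have hb2 : 2 * π * ((k:ℝ) + 3/2) = m + π := by rw [hm]; ring
  rw [hb1, hb2]
  -- cos periodicity
  have hcos : ∀ s : ℝ, Real.cos (m + s) = Real.cos s := by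
    intro s
    have h : m + s = s + ((k:ℝ) + 1) * (2 * π) := by rw [hm]; ring
    have h2 : m + s = s + ((k+1 : ℕ) : ℝ) * (2 * π) := by rw [h]; push_cast; ring
    rw [h2, Real.cos_add_nat_mul_two_pi]
  have hcos' : ∀ s : ℝ, Real.cos (m - s) = Real.cos s := by
    intro s
    have h : m - s = m + (-s) := by ring
    rw [h, hcos, Real.cos_neg]
  -- integrability helpers
  have hZint : ∀ a b : ℝ, Set.uIcc a b ⊆ Set.Icc 0 z →
      IntervalIntegrable (fun t => Z t * Real.cos t) MeasureTheory.volume a b := by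
    intro a b h
    exact ((hanti.mono h).intervalIntegrable).mul_continuousOn Real.continuous_cos.continuousOn
  have hsub1 : Set.uIcc (m - π) m ⊆ Set.Icc 0 z := by
    rw [Set.uIcc_of_le (by linarith)]
    intro t ht; exact hmem t ht.1 (by linarith [ht.2])
  have hsub2 : Set.uIcc m (m + π) ⊆ Set.Icc 0 z := by
    rw [Set.uIcc_of_le (by linarith)]
    intro t ht; exact hmem t (by linarith [ht.1]) ht.2
  -- split at m
  rw [← integral_add_adjacent_intervals (hZint _ _ hsub1) (hZint _ _ hsub2)]
  -- first piece: substitution t = m - s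
  have hA : (∫ t in (m - π)..m, Z t * Real.cos t) = ∫ s in (0:ℝ)..π, Z (m - s) * Real.cos s := by
    have := intervalIntegral.integral_comp_sub_left (a := 0) (b := π)
      (fun t => Z t * Real.cos t) m
    simp only [sub_zero] at this
    rw [← this]
    congr 1; funext s; rw [hcos']
  have hB : (∫ t in m..(m + π), Z t * Real.cos t) = ∫ s in (0:ℝ)..π, Z (m + s) * Real.cos s := by
    have := intervalIntegral.integral_comp_add_left (a := 0) (b := π)
      (fun t => Z t * Real.cos t) m
    simp only [add_zero] at this
    rw [← this]
    congr 1; funext s; rw [hcos]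
  rw [hA, hB]
  -- integrability of the folded pieces
  have hmono1 : ∀ c : ℝ, MonotoneOn (fun s => Z (m - c + s)) (Set.uIcc 0 (π/2)) →
      True := fun _ _ => trivial
  have int1 : IntervalIntegrable (fun s => Z (m - s) * Real.cos s) MeasureTheory.volume 0 (π/2) := by
    apply IntervalIntegrable.mul_continuousOn _ Real.continuous_cos.continuousOn
    apply MonotoneOn.intervalIntegrable
    intro s hs t ht hst
    rw [Set.uIcc_of_le (by linarith)] at hs ht
    exact hanti (hmem _ (by linarith [ht.2]) (by linarith [ht.1]))
      (hmem _ (by linarith [hs.2]) (by linarith [hs.1])) (by linarith)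
  have int2 : IntervalIntegrable (fun s => Z (m + s) * Real.cos s) MeasureTheory.volume 0 (π/2) := by
    apply IntervalIntegrable.mul_continuousOn _ Real.continuous_cos.continuousOn
    apply AntitoneOn.intervalIntegrable
    intro s hs t ht hst
    rw [Set.uIcc_of_le (by linarith)] at hs ht
    exact hanti (hmem _ (by linarith [hs.1]) (by linarith [hs.2]))
      (hmem _ (by linarith [ht.1]) (by linarith [ht.2])) (by linarith)
  have int3 : IntervalIntegrable (fun s => Z (m - π + s) * Real.cos s) MeasureTheory.volume 0 (π/2) := by
    apply IntervalIntegrable.mul_continuousOn _ Real.continuous_cos.continuousOn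
    apply AntitoneOn.intervalIntegrable
    intro s hs t ht hst
    rw [Set.uIcc_of_le (by linarith)] at hs ht
    exact hanti (hmem _ (by linarith [hs.1]) (by linarith [hs.2]))
      (hmem _ (by linarith [ht.1]) (by linarith [ht.2])) (by linarith)
  have int4 : IntervalIntegrable (fun s => Z (m + π - s) * Real.cos s) MeasureTheory.volume 0 (π/2) := by
    apply IntervalIntegrable.mul_continuousOn _ Real.continuous_cos.continuousOn
    apply MonotoneOn.intervalIntegrable
    intro s hs t ht hst
    rw [Set.uIcc_of_le (by linarith)] at hs ht
    exact hanti (hmem _ (by linarith [ht.2]) (by linarith [ht.1]))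
      (hmem _ (by linarith [hs.2]) (by linarith [hs.1])) (by linarith)
  -- fold each piece at π/2
  have hfold : ∀ f : ℝ → ℝ, IntervalIntegrable f MeasureTheory.volume 0 (π/2) →
      IntervalIntegrable (fun s => f (π - s)) MeasureTheory.volume 0 (π/2) → False ∨ True := by
    intro f _ _; exact Or.inr trivial
  have hA2 : (∫ s in (0:ℝ)..π, Z (m - s) * Real.cos s) =
      (∫ s in (0:ℝ)..(π/2), Z (m - s) * Real.cos s) -
      (∫ s in (0:ℝ)..(π/2), Z (m - π + s) * Real.cos s) := by
    have hsplit : (∫ s in (0:ℝ)..(π/2), Z (m - s) * Real.cos s) +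
        (∫ s in (π/2)..π, Z (m - s) * Real.cos s) =
        ∫ s in (0:ℝ)..π, Z (m - s) * Real.cos s := by
      apply integral_add_adjacent_intervals int1
      apply IntervalIntegrable.mul_continuousOn _ Real.continuous_cos.continuousOn
      apply MonotoneOn.intervalIntegrable
      intro s hs t ht hst
      rw [Set.uIcc_of_le (by linarith)] at hs ht
      exact hanti (hmem _ (by linarith [ht.2]) (by linarith [ht.1]))
        (hmem _ (by linarith [hs.2]) (by linarith [hs.1])) (by linarith)
    have hsub : (∫ s in (π/2)..π, Z (m - s) * Real.cos s) =
        - ∫ s in (0:ℝ)..(π/2), Z (m - π + s) * Real.cos s := by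
      have := intervalIntegral.integral_comp_sub_left (a := 0) (b := π/2)
        (fun s => Z (m - s) * Real.cos s) π
      simp only [sub_zero] at this
      have heq : (∫ s in (0:ℝ)..(π/2), Z (m - (π - s)) * Real.cos (π - s)) =
          ∫ s in (π - π/2)..π, Z (m - s) * Real.cos s := this
      rw [show π - π/2 = π/2 by ring] at heq
      rw [← heq]
      rw [← intervalIntegral.integral_neg]
      congr 1; funext s
      rw [Real.cos_pi_sub]
      have : m - (π - s) = m - π + s := by ring
      rw [this]; ring
    linarith [hsplit, hsub]
  have hB2 : (∫ s in (0:ℝ)..π, Z (m + s) * Real.cos s) =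
      (∫ s in (0:ℝ)..(π/2), Z (m + s) * Real.cos s) -
      (∫ s in (0:ℝ)..(π/2), Z (m + π - s) * Real.cos s) := by
    have hsplit : (∫ s in (0:ℝ)..(π/2), Z (m + s) * Real.cos s) +
        (∫ s in (π/2)..π, Z (m + s) * Real.cos s) =
        ∫ s in (0:ℝ)..π, Z (m + s) * Real.cos s := by
      apply integral_add_adjacent_intervals int2
      apply IntervalIntegrable.mul_continuousOn _ Real.continuous_cos.continuousOn
      apply AntitoneOn.intervalIntegrable
      intro s hs t ht hst
      rw [Set.uIcc_of_le (by linarith)] at hs ht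
      exact hanti (hmem _ (by linarith [hs.1]) (by linarith [hs.2]))
        (hmem _ (by linarith [ht.1]) (by linarith [ht.2])) (by linarith)
    have hsub : (∫ s in (π/2)..π, Z (m + s) * Real.cos s) =
        - ∫ s in (0:ℝ)..(π/2), Z (m + π - s) * Real.cos s := by
      have := intervalIntegral.integral_comp_sub_left (a := 0) (b := π/2)
        (fun s => Z (m + s) * Real.cos s) π
      simp only [sub_zero] at this
      have heq : (∫ s in (0:ℝ)..(π/2), Z (m + (π - s)) * Real.cos (π - s)) =
          ∫ s in (π - π/2)..π, Z (m + s) * Real.cos s := this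
      rw [show π - π/2 = π/2 by ring] at heq
      rw [← heq]
      rw [← intervalIntegral.integral_neg]
      congr 1; funext s
      rw [Real.cos_pi_sub]
      have : m + (π - s) = m + π - s := by ring
      rw [this]; ring
    linarith [hsplit, hsub]
  rw [hA2, hB2]
  have hcomb : (∫ s in (0:ℝ)..(π/2), Z (m - s) * Real.cos s) -
      (∫ s in (0:ℝ)..(π/2), Z (m - π + s) * Real.cos s) +
      ((∫ s in (0:ℝ)..(π/2), Z (m + s) * Real.cos s) -
      (∫ s in (0:ℝ)..(π/2), Z (m + π - s) * Real.cos s)) =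
      ∫ s in (0:ℝ)..(π/2),
        (Z (m - s) + Z (m + s) - (Z (m - π + s) + Z (m + π - s))) * Real.cos s := by
    rw [← intervalIntegral.integral_sub int1 int3, ← intervalIntegral.integral_sub int2 int4,
      ← intervalIntegral.integral_add (int1.sub int3) (int2.sub int4)]
    congr 1; funext s; ring
  rw [hcomb]
  apply intervalIntegral.integral_nonneg (by linarith)
  intro s hs
  obtain ⟨hs0, hs2⟩ := hs
  have hcs : 0 ≤ Real.cos s := Real.cos_nonneg_of_mem_Icc ⟨by linarith, hs2⟩
  apply mul_nonneg _ hcs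
  have key := concave_pair hconc (m := m) (s₁ := s) (s₂ := π - s) hs0 (by linarith) (by linarith)
    (hmem _ (by linarith) (by linarith)) (hmem _ (by linarith) (by linarith))
  have e1 : m - (π - s) = m - π + s := by ring
  have e2 : m + (π - s) = m + π - s := by ring
  rw [e1, e2] at key
  linarith
end

section
/- Let Z:[0,z]→ℝ be non-increasing, and let k be a natural number with 2π(k+1/2) ≤ z. Then ∫_{2πk}^{2π(k+1/2)} Z(t)cos(t) dt ≥ 0. -/
open Real Set intervalIntegral

theorem stmt_2 (z : ℝ) (Z : ℝ → ℝ) (k : ℕ)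
    (hanti : AntitoneOn Z (Set.Icc 0 z))
    (hz : 2 * π * (k + 1/2) ≤ z) :
    0 ≤ ∫ t in (2 * π * k)..(2 * π * (k + 1/2)), Z t * Real.cos t := by
  have hπ := Real.pi_pos
  set a : ℝ := 2 * π * k with ha
  set m : ℝ := a + π / 2 with hm
  set b : ℝ := a + π with hb
  have hbz : b ≤ z := by
    have : 2 * π * (k + 1/2) = b := by rw [hb, ha]; ring
    linarith [this ▸ hz]
  have ha0 : 0 ≤ a := by positivity
  have ham : a ≤ m := by rw [hm]; linarith
  have hmb : m ≤ b := by rw [hb, hm]; linarith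
  have hEq : (2 * π * (k + 1/2) : ℝ) = b := by rw [hb, ha]; ring
  rw [hEq]
  -- cos t = cos (t - a)
  have hcos : ∀ t : ℝ, Real.cos t = Real.cos (t - a) := by
    intro t
    have : t = (t - a) + k * (2 * π) := by rw [ha]; ring
    rw [this, Real.cos_add_nat_mul_two_pi]
    ring_nf
    congr 1; rw [ha]; ring
  have hsuba : Set.Icc a m ⊆ Set.Icc 0 z := Set.Icc_subset_Icc ha0 (le_trans hmb hbz)
  have hsubm : Set.Icc m b ⊆ Set.Icc 0 z := Set.Icc_subset_Icc (le_trans ha0 ham) hbz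
  have hZint1 : IntervalIntegrable Z MeasureTheory.volume a m := by
    apply AntitoneOn.intervalIntegrable
    rw [Set.uIcc_of_le ham]
    exact hanti.mono hsuba
  have hZint2 : IntervalIntegrable Z MeasureTheory.volume m b := by
    apply AntitoneOn.intervalIntegrable
    rw [Set.uIcc_of_le hmb]
    exact hanti.mono hsubm
  have hint1 : IntervalIntegrable (fun t => Z t * Real.cos t) MeasureTheory.volume a m :=
    hZint1.mul_continuousOn (Continuous.continuousOn Real.continuous_cos)
  have hint2 : IntervalIntegrable (fun t => Z t * Real.cos t) MeasureTheory.volume m b :=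
    hZint2.mul_continuousOn (Continuous.continuousOn Real.continuous_cos)
  have hcint1 : IntervalIntegrable (fun t => Z m * Real.cos t) MeasureTheory.volume a m :=
    (continuous_const.mul Real.continuous_cos).intervalIntegrable a m
  have hcint2 : IntervalIntegrable (fun t => Z m * Real.cos t) MeasureTheory.volume m b :=
    (continuous_const.mul Real.continuous_cos).intervalIntegrable m b
  have hcosnn : ∀ t ∈ Set.Icc a m, 0 ≤ Real.cos t := by
    intro t ht
    rw [hcos t]
    apply Real.cos_nonneg_of_mem_Icc
    constructor
    · have := ht.1; linarith
    · have := ht.2; rw [hm] at this; linarith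
  have hcosnp : ∀ t ∈ Set.Icc m b, Real.cos t ≤ 0 := by
    intro t ht
    rw [hcos t]
    apply Real.cos_nonpos_of_pi_div_two_le_of_le
    · have := ht.1; rw [hm] at this; linarith
    · have := ht.2; rw [hb] at this; linarith
  have hmono1 : ∫ t in a..m, Z m * Real.cos t ≤ ∫ t in a..m, Z t * Real.cos t := by
    apply intervalIntegral.integral_mono_on ham hcint1 hint1
    intro t ht
    have hZ : Z m ≤ Z t := hanti (hsuba ht) (hsuba ⟨ham, le_refl m⟩) ht.2
    exact mul_le_mul_of_nonneg_right hZ (hcosnn t ht)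
  have hmono2 : ∫ t in m..b, Z m * Real.cos t ≤ ∫ t in m..b, Z t * Real.cos t := by
    apply intervalIntegral.integral_mono_on hmb hcint2 hint2
    intro t ht
    have hZ : Z t ≤ Z m := hanti (hsubm ⟨le_refl m, hmb⟩) (hsubm ht) ht.1
    exact mul_le_mul_of_nonpos_right hZ (hcosnp t ht)
  have hsina : Real.sin a = 0 := by
    have : a = 0 + k * (2 * π) := by rw [ha]; ring
    rw [this, Real.sin_add_nat_mul_two_pi, Real.sin_zero]
  have hsinm : Real.sin m = 1 := by
    have : m = π / 2 + k * (2 * π) := by rw [hm, ha]; ring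
    rw [this, Real.sin_add_nat_mul_two_pi, Real.sin_pi_div_two]
  have hsinb : Real.sin b = 0 := by
    have : b = π + k * (2 * π) := by rw [hb, ha]; ring
    rw [this, Real.sin_add_nat_mul_two_pi, Real.sin_pi]
  have hc1 : ∫ t in a..m, Z m * Real.cos t = Z m := by
    rw [intervalIntegral.integral_const_mul, integral_cos, hsinm, hsina]; ring
  have hc2 : ∫ t in m..b, Z m * Real.cos t = -Z m := by
    rw [intervalIntegral.integral_const_mul, integral_cos, hsinm, hsinb]; ring
  have hsplit : (∫ t in a..m, Z t * Real.cos t) + ∫ t in m..b, Z t * Real.cos t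
      = ∫ t in a..b, Z t * Real.cos t :=
    intervalIntegral.integral_add_adjacent_intervals hint1 hint2
  rw [← hsplit]
  rw [hc1] at hmono1
  rw [hc2] at hmono2
  linarith
end

section
/- Let Ω ⊂ ℝ^d be a bounded open set and ξ₀ ∈ ℝ^d a nonzero vector with ∫_Ω e^{i ξ₀·x} dx = 0. Then the functions e^{i ξ₀·x/2} and e^{-i ξ₀·x/2} are linearly independent in L²(Ω), and every function φ = a e^{i ξ₀·x/2} + b e^{-i ξ₀·x/2} satisfies ‖∇φ‖²_{L²(Ω)} = (|ξ₀|²/4) ‖φ‖²_{L²(Ω)}. -/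
open Real MeasureTheory Complex
open scoped RealInnerProductSpace

private lemma aux_normsq (z w : ℂ) :
    ‖z + w‖ ^ 2 = ‖z‖ ^ 2 + ‖w‖ ^ 2 + 2 * (z * (starRingEnd ℂ) w).re := by
  simp only [Complex.sq_norm]
  exact Complex.normSq_add z w

theorem stmt_6 (d : ℕ) (Ω : Set (EuclideanSpace ℝ (Fin d)))
    (hopen : IsOpen Ω) (hbdd : Bornology.IsBounded Ω)
    (hpos : 0 < volume Ω)
    (ξ₀ : EuclideanSpace ℝ (Fin d)) (hξ₀ : ξ₀ ≠ 0)
    (ep em : EuclideanSpace ℝ (Fin d) → ℂ)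
    (hep : ∀ x, ep x = Complex.exp (Complex.I * ((⟪ξ₀, x⟫ : ℝ) / 2)))
    (hem : ∀ x, em x = Complex.exp (-(Complex.I * ((⟪ξ₀, x⟫ : ℝ) / 2))))
    (hzero : ∫ x in Ω, Complex.exp (Complex.I * (⟪ξ₀, x⟫ : ℝ)) = 0) :
    (∀ a b : ℂ, (∀ x ∈ Ω, a * ep x + b * em x = 0) → a = 0 ∧ b = 0) ∧
      (∀ a b : ℂ, ∀ φ : EuclideanSpace ℝ (Fin d) → ℂ,
        (∀ x, φ x = a * ep x + b * em x) →
        ∀ gradφ : EuclideanSpace ℝ (Fin d) → EuclideanSpace ℂ (Fin d),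
        (∀ x, gradφ x = fun j =>
          a * (Complex.I / 2 * (ξ₀ j : ℂ)) * ep x
            + b * (-(Complex.I / 2) * (ξ₀ j : ℂ)) * em x) →
        (∫ x in Ω, ‖gradφ x‖ ^ 2) = ‖ξ₀‖ ^ 2 / 4 * ∫ x in Ω, ‖φ x‖ ^ 2) := by
  have hΩm : MeasurableSet Ω := hopen.measurableSet
  have hfin : volume Ω < ⊤ := hbdd.measure_lt_top
  have hμne : (volume Ω).toReal ≠ 0 := by
    simp [ENNReal.toReal_eq_zero_iff, hpos.ne', hfin.ne]
  set E : EuclideanSpace ℝ (Fin d) → ℂ :=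
    fun x => Complex.exp (Complex.I * (⟪ξ₀, x⟫ : ℝ)) with hE
  have hcont : Continuous E := by
    exact Complex.continuous_exp.comp (continuous_const.mul
      (Complex.continuous_ofReal.comp (continuous_const.inner continuous_id)))
  have hEnorm : ∀ x, ‖E x‖ = 1 := by
    intro x
    simp [hE, Complex.norm_exp]
  have hEint : IntegrableOn E Ω := by
    refine Integrable.mono' (g := fun _ => (1 : ℝ))
      (integrableOn_const hfin.ne) hcont.aestronglyMeasurable ?_
    filter_upwards with x
    rw [hEnorm]
  have hepem : ∀ x, ep x * em x = 1 := by
    intro x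
    rw [hep, hem, ← Complex.exp_add]
    simp
  have hep2 : ∀ x, ep x * ep x = E x := by
    intro x
    have harg : Complex.I * ((⟪ξ₀, x⟫ : ℝ) / 2) + Complex.I * ((⟪ξ₀, x⟫ : ℝ) / 2)
        = Complex.I * (⟪ξ₀, x⟫ : ℝ) := by ring
    rw [hep, ← Complex.exp_add, harg]
  have hconj_em : ∀ x, (starRingEnd ℂ) (em x) = ep x := by
    intro x
    rw [hep, hem, ← Complex.exp_conj]
    congr 1
    simp [map_div₀, map_ofNat]
  have hnep : ∀ x, ‖ep x‖ = 1 := by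
    intro x
    rw [hep]
    simp [Complex.norm_exp]
  have hnem : ∀ x, ‖em x‖ = 1 := by
    intro x
    rw [hem]
    simp [Complex.norm_exp]
  constructor
  · intro a b hab
    have hb0 : ∀ x ∈ Ω, a * E x + b = (0 : ℂ) := by
      intro x hx
      have h1 := hab x hx
      have h2 : a * E x + b = (a * ep x + b * em x) * ep x := by
        linear_combination a * (hep2 x).symm + b * (hepem x).symm
      rw [h2, h1, zero_mul]
    have hint0 : ∫ x in Ω, (a * E x + b) = 0 := by
      rw [setIntegral_congr_fun hΩm hb0]
      simp
    rw [integral_add (hEint.const_mul a) (integrableOn_const hfin.ne),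
      integral_const_mul, hzero, mul_zero, zero_add, setIntegral_const] at hint0
    have hb : b = 0 := by
      rcases smul_eq_zero.mp hint0 with h | h
      · exact absurd h hμne
      · exact h
    refine ⟨?_, hb⟩
    obtain ⟨x₀, hx₀⟩ := nonempty_of_measure_ne_zero hpos.ne'
    have h1 := hab x₀ hx₀
    rw [hb, zero_mul, add_zero, mul_eq_zero] at h1
    rcases h1 with h | h
    · exact h
    · rw [hep] at h
      exact absurd h (Complex.exp_ne_zero _)
  · intro a b φ hφ g hg
    set K : ℂ := a * (starRingEnd ℂ) b with hK
    have key : ∀ (x : _), ep x * (starRingEnd ℂ) (em x) = E x := by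
      intro x
      rw [hconj_em x]
      exact hep2 x
    have cross : ∀ x, a * ep x * (starRingEnd ℂ) (b * em x) = K * E x := by
      intro x
      rw [map_mul, ← key x, hK]
      ring
    have hφsq : ∀ x, ‖φ x‖ ^ 2 = ‖a‖ ^ 2 + ‖b‖ ^ 2 + 2 * (K * E x).re := by
      intro x
      rw [hφ x, aux_normsq, cross x, norm_mul, norm_mul, hnep, hnem, mul_one, mul_one]
    have hcsq : ∀ x, ‖a * ep x - b * em x‖ ^ 2
        = ‖a‖ ^ 2 + ‖b‖ ^ 2 - 2 * (K * E x).re := by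
      intro x
      have cross' : a * ep x * (starRingEnd ℂ) (-(b * em x)) = -(K * E x) := by
        rw [map_neg, mul_neg, cross x]
      rw [sub_eq_add_neg, aux_normsq, cross', norm_mul, norm_neg, norm_mul,
        hnep, hnem, mul_one, mul_one, Complex.neg_re]
      ring
    have hgsq : ∀ x, ‖g x‖ ^ 2 = ‖ξ₀‖ ^ 2 / 4 * ‖a * ep x - b * em x‖ ^ 2 := by
      intro x
      have hsum : ‖g x‖ ^ 2 = ∑ j, ‖g x j‖ ^ 2 := by
        rw [EuclideanSpace.norm_eq, Real.sq_sqrt]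
        exact Finset.sum_nonneg fun j _ => sq_nonneg _
      rw [hsum]
      have hj : ∀ j, ‖g x j‖ ^ 2 = (ξ₀ j) ^ 2 / 4 * ‖a * ep x - b * em x‖ ^ 2 := by
        intro j
        have hgx : g x j = (Complex.I / 2 * (ξ₀ j : ℂ)) * (a * ep x - b * em x) := by
          rw [hg x]
          ring
        rw [hgx, norm_mul, norm_mul, mul_pow, mul_pow]
        have h1 : ‖Complex.I / 2‖ = 1 / 2 := by
          simp [norm_div]
        have h2 : ‖((ξ₀ j : ℝ) : ℂ)‖ = |ξ₀ j| := Complex.norm_real _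
        rw [h1, h2, _root_.sq_abs]
        ring
      rw [Finset.sum_congr rfl fun j _ => hj j, ← Finset.sum_mul, ← Finset.sum_div]
      congr 2
      rw [EuclideanSpace.norm_eq, Real.sq_sqrt]
      · exact (Finset.sum_congr rfl fun j _ => by rw [Real.norm_eq_abs, _root_.sq_abs]).symm
      · exact Finset.sum_nonneg fun j _ => sq_nonneg _
    have hKEint : IntegrableOn (fun x => K * E x) Ω := hEint.const_mul K
    have hKre_int : IntegrableOn (fun x => (K * E x).re) Ω := by
      have := hKEint.re
      simpa [IntegrableOn] using this
    have hKre : ∫ x in Ω, (K * E x).re = 0 := by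
      have h := integral_re (𝕜 := ℂ) hKEint
      simp only [RCLike.re_to_complex] at h
      rw [h, integral_const_mul, hzero, mul_zero, Complex.zero_re]
    have hconst : IntegrableOn (fun _ : EuclideanSpace ℝ (Fin d) => ‖a‖ ^ 2 + ‖b‖ ^ 2) Ω :=
      integrableOn_const hfin.ne
    have h2re : IntegrableOn (fun x => 2 * (K * E x).re) Ω := by
      simpa [IntegrableOn] using hKre_int.const_mul (2 : ℝ)
    have hint2re : ∫ x in Ω, 2 * (K * E x).re = 0 := by
      rw [integral_const_mul, hKre, mul_zero]
    have I1 : ∫ x in Ω, ‖φ x‖ ^ 2 = (volume Ω).toReal * (‖a‖ ^ 2 + ‖b‖ ^ 2) := by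
      rw [show (fun x => ‖φ x‖ ^ 2) = fun x => (‖a‖ ^ 2 + ‖b‖ ^ 2) + 2 * (K * E x).re from
        funext fun x => by rw [hφsq x]]
      rw [integral_add hconst h2re, hint2re, add_zero, setIntegral_const, smul_eq_mul, measureReal_def]
    have I2 : ∫ x in Ω, ‖a * ep x - b * em x‖ ^ 2
        = (volume Ω).toReal * (‖a‖ ^ 2 + ‖b‖ ^ 2) := by
      rw [show (fun x => ‖a * ep x - b * em x‖ ^ 2)
          = fun x => (‖a‖ ^ 2 + ‖b‖ ^ 2) - 2 * (K * E x).re from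
        funext fun x => by rw [hcsq x]]
      rw [integral_sub hconst h2re, hint2re, sub_zero, setIntegral_const, smul_eq_mul, measureReal_def]
    calc ∫ x in Ω, ‖g x‖ ^ 2
        = ∫ x in Ω, ‖ξ₀‖ ^ 2 / 4 * ‖a * ep x - b * em x‖ ^ 2 :=
          setIntegral_congr_fun hΩm fun x _ => hgsq x
      _ = ‖ξ₀‖ ^ 2 / 4 * ∫ x in Ω, ‖a * ep x - b * em x‖ ^ 2 := integral_const_mul _ _
      _ = ‖ξ₀‖ ^ 2 / 4 * ∫ x in Ω, ‖φ x‖ ^ 2 := by rw [I1, I2]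
end

section
/- Let Ω ⊂ ℝ² be a bounded balanced convex domain with diameter D, and suppose that for every unit vector e ∈ S¹ and every ρ ∈ (0, 4π/D] one has ∫_Ω cos(ρ e·x) dx ≠ 0. Then a contradiction follows; equivalently, there exists a real vector ξ with 0 < |ξ| ≤ 4π/D and ∫_Ω cos(ξ·x) dx = 0. -/
open Real MeasureTheory intervalIntegral Set
open scoped RealInnerProductSpace

lemma vol_convex {S : Set ℝ} (h : Convex ℝ S) (hne : S.Nonempty)
    (hba : BddAbove S) (hbb : BddBelow S) :
    volume S = ENNReal.ofReal (sSup S - sInf S) := by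
  have hsub1 : S ⊆ Icc (sInf S) (sSup S) := fun t ht => ⟨csInf_le hbb ht, le_csSup hba ht⟩
  have hsub2 : Ioo (sInf S) (sSup S) ⊆ S := by
    intro t ht
    obtain ⟨a, haS, hat⟩ := exists_lt_of_csInf_lt hne ht.1
    obtain ⟨c, hcS, htc⟩ := exists_lt_of_lt_csSup hne ht.2
    exact h.ordConnected.out haS hcS ⟨hat.le, htc.le⟩
  refine le_antisymm ?_ ?_
  · calc volume S ≤ volume (Icc (sInf S) (sSup S)) := measure_mono hsub1
      _ = ENNReal.ofReal (sSup S - sInf S) := Real.volume_Icc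
  · calc ENNReal.ofReal (sSup S - sInf S) = volume (Ioo (sInf S) (sSup S)) := Real.volume_Ioo.symm
      _ ≤ volume S := measure_mono hsub2

lemma core1d {M : ℝ} (hM : 0 < M) (B : ℝ → ℝ)
    (hB : ConcaveOn ℝ (Set.Ioo 0 M) B)
    (hInt : IntegrableOn B (Set.Ioo 0 M)) :
    ∫ s in Set.Ioo 0 M, B s * Real.cos (2 * π / M * s) ≤ 0 := by
  have hM' : M ≠ 0 := hM.ne'
  set ρ : ℝ := 2 * π / M with hρ
  set f : ℝ → ℝ := fun s => B s * Real.cos (ρ * s) with hf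
  have hIf : IntervalIntegrable f volume 0 M := by
    rw [intervalIntegrable_iff_integrableOn_Ioo_of_le hM.le]
    have : Integrable (fun s => Real.cos (ρ * s) * B s) (volume.restrict (Ioo 0 M)) := by
      refine Integrable.bdd_mul (c := 1) hInt ?_ (Filter.Eventually.of_forall fun x => by simpa using Real.abs_cos_le_one _)
      exact (Real.continuous_cos.comp (continuous_const.mul continuous_id)).aestronglyMeasurable
    exact this.congr (Filter.Eventually.of_forall fun x => mul_comm _ _)
  have h1 : (0:ℝ) ≤ M/4 := by linarith
  have h2 : (M/4:ℝ) ≤ M/2 := by linarith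
  have h3 : (M/2:ℝ) ≤ 3*M/4 := by linarith
  have h4 : (3*M/4:ℝ) ≤ M := by linarith
  have sub1 : IntervalIntegrable f volume 0 (M/4) :=
    hIf.mono_set (by rw [uIcc_of_le h1, uIcc_of_le hM.le]; exact Icc_subset_Icc le_rfl (by linarith))
  have sub2 : IntervalIntegrable f volume (M/4) (M/2) :=
    hIf.mono_set (by rw [uIcc_of_le h2, uIcc_of_le hM.le]; exact Icc_subset_Icc h1 (by linarith))
  have sub3 : IntervalIntegrable f volume (M/2) (3*M/4) :=
    hIf.mono_set (by rw [uIcc_of_le h3, uIcc_of_le hM.le]; exact Icc_subset_Icc (by linarith) (by linarith))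
  have sub4 : IntervalIntegrable f volume (3*M/4) M :=
    hIf.mono_set (by rw [uIcc_of_le h4, uIcc_of_le hM.le]; exact Icc_subset_Icc (by linarith) le_rfl)
  have e2 : ∫ x in (M/4)..(M/2), f x = ∫ x in (0:ℝ)..(M/4), f (M/2 - x) := by
    rw [integral_comp_sub_left f (M/2)]; congr 1 <;> ring
  have e3 : ∫ x in (M/2)..(3*M/4), f x = ∫ x in (0:ℝ)..(M/4), f (M/2 + x) := by
    rw [integral_comp_add_left f (M/2)]; congr 1 <;> ring
  have e4 : ∫ x in (3*M/4)..M, f x = ∫ x in (0:ℝ)..(M/4), f (M - x) := by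
    rw [integral_comp_sub_left f M]; congr 1 <;> ring
  have ii2 : IntervalIntegrable (fun x => f (M/2 - x)) volume 0 (M/4) := by
    have h := (sub2.comp_sub_left (M/2)).symm
    have ea : M/2 - (M/2) = (0:ℝ) := by ring
    have eb : M/2 - (M/4) = M/4 := by ring
    rwa [ea, eb] at h
  have ii3 : IntervalIntegrable (fun x => f (M/2 + x)) volume 0 (M/4) := by
    have h := sub3.comp_add_left (M/2)
    have ea : M/2 - (M/2) = (0:ℝ) := by ring
    have eb : 3*M/4 - (M/2) = M/4 := by ring
    rwa [ea, eb] at h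
  have ii4 : IntervalIntegrable (fun x => f (M - x)) volume 0 (M/4) := by
    have h := (sub4.comp_sub_left M).symm
    have ea : M - M = (0:ℝ) := by ring
    have eb : M - 3*M/4 = M/4 := by ring
    rwa [ea, eb] at h
  have split : ∫ x in (0:ℝ)..(M/4), (f x + f (M/2 - x) + f (M/2 + x) + f (M - x))
      = ∫ x in (0:ℝ)..M, f x := by
    rw [integral_add ((sub1.add ii2).add ii3) ii4, integral_add (sub1.add ii2) ii3,
        integral_add sub1 ii2, ← e2, ← e3, ← e4,
        integral_add_adjacent_intervals sub1 sub2,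
        integral_add_adjacent_intervals (sub1.trans sub2) sub3,
        integral_add_adjacent_intervals ((sub1.trans sub2).trans sub3) sub4]
  have key : ∀ s ∈ Ioc (0:ℝ) (M/4), f s + f (M/2 - s) + f (M/2 + s) + f (M - s) ≤ 0 := by
    intro s hs
    obtain ⟨hs0, hs4⟩ := hs
    have hcos2 : Real.cos (ρ * (M/2 - s)) = - Real.cos (ρ * s) := by
      rw [show ρ * (M/2 - s) = π - ρ * s by rw [hρ]; field_simp, Real.cos_pi_sub]
    have hcos3 : Real.cos (ρ * (M/2 + s)) = - Real.cos (ρ * s) := by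
      rw [show ρ * (M/2 + s) = π + ρ * s by rw [hρ]; field_simp]
      rw [Real.cos_add, Real.cos_pi, Real.sin_pi]; ring
    have hcos4 : Real.cos (ρ * (M - s)) = Real.cos (ρ * s) := by
      rw [show ρ * (M - s) = 2*π - ρ * s by rw [hρ]; field_simp]
      rw [Real.cos_sub, Real.cos_two_pi, Real.sin_two_pi]; ring
    have hcnn : 0 ≤ Real.cos (ρ * s) := by
      apply Real.cos_nonneg_of_mem_Icc
      constructor
      · have : (0:ℝ) ≤ ρ * s := by positivity
        linarith [Real.pi_pos]
      · rw [hρ, div_mul_eq_mul_div, div_le_iff₀ hM]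
        nlinarith [Real.pi_pos]
    have hmem1 : s ∈ Ioo (0:ℝ) M := ⟨hs0, by linarith⟩
    have hmem2 : M - s ∈ Ioo (0:ℝ) M := ⟨by linarith, by linarith⟩
    set lam : ℝ := M / (2 * (M - 2*s)) with hlam
    have hden : 0 < M - 2*s := by linarith
    have hlam0 : 0 ≤ lam := by positivity
    have hlam1 : lam ≤ 1 := by
      rw [hlam, div_le_one (by linarith)]; linarith
    have hkey : lam * (M - 2*s) = M/2 := by
      rw [hlam, div_mul_eq_mul_div, div_eq_div_iff (by positivity : (0:ℝ) < 2*(M-2*s)).ne' (two_ne_zero)]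
      ring
    have hc1 : lam • B s + (1 - lam) • B (M - s) ≤ B (lam • s + (1 - lam) • (M - s)) :=
      hB.2 hmem1 hmem2 hlam0 (by linarith) (by ring)
    have hc2 : (1 - lam) • B s + lam • B (M - s) ≤ B ((1 - lam) • s + lam • (M - s)) :=
      hB.2 hmem1 hmem2 (by linarith) hlam0 (by ring)
    rw [smul_eq_mul, smul_eq_mul, smul_eq_mul, smul_eq_mul] at hc1 hc2
    have hx1 : lam * s + (1 - lam) * (M - s) = M/2 - s := by linear_combination (-1 : ℝ) * hkey
    have hx2 : (1 - lam) * s + lam * (M - s) = M/2 + s := by linear_combination hkey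
    rw [hx1] at hc1
    rw [hx2] at hc2
    have hbr : B s + B (M - s) ≤ B (M/2 - s) + B (M/2 + s) := by linarith
    have hrw : f s + f (M/2 - s) + f (M/2 + s) + f (M - s)
        = Real.cos (ρ * s) * ((B s + B (M - s)) - (B (M/2 - s) + B (M/2 + s))) := by
      simp only [hf, hcos2, hcos3, hcos4]; ring
    rw [hrw]
    exact mul_nonpos_of_nonneg_of_nonpos hcnn (by linarith)
  calc ∫ s in Ioo 0 M, f s = ∫ s in Ioc 0 M, f s := (integral_Ioc_eq_integral_Ioo).symm
    _ = ∫ s in (0:ℝ)..M, f s := (integral_of_le hM.le).symm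
    _ = ∫ x in (0:ℝ)..(M/4), (f x + f (M/2 - x) + f (M/2 + x) + f (M - x)) := split.symm
    _ = ∫ x in Ioc (0:ℝ) (M/4), (f x + f (M/2 - x) + f (M/2 + x) + f (M - x)) := integral_of_le h1
    _ ≤ 0 := setIntegral_nonpos measurableSet_Ioc key


set_option maxHeartbeats 1000000 in
theorem stmt_9 (Ω : Set (EuclideanSpace ℝ (Fin 2)))
    (hopen : IsOpen Ω) (hne : Ω.Nonempty) (hbdd : Bornology.IsBounded Ω)
    (hconv : Convex ℝ Ω) (hbal : ∀ x ∈ Ω, -x ∈ Ω) :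
    ∃ ξ : EuclideanSpace ℝ (Fin 2),
      0 < ‖ξ‖ ∧ ‖ξ‖ ≤ 4 * π / Metric.diam Ω ∧
        ∫ x in Ω, Real.cos (⟪ξ, x⟫ : ℝ) = 0 := by
  classical
  obtain ⟨x₀, hx₀⟩ := hne
  have hneΩ : Ω.Nonempty := ⟨x₀, hx₀⟩
  have h0 : (0 : EuclideanSpace ℝ (Fin 2)) ∈ Ω := by
    have h := hconv hx₀ (hbal x₀ hx₀) (by norm_num : (0:ℝ) ≤ 1/2) (by norm_num : (0:ℝ) ≤ 1/2)
      (by norm_num)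
    simpa [smul_neg] using h
  have hK : IsCompact (closure Ω) := hbdd.isCompact_closure
  obtain ⟨p, hpK, hpmax'⟩ := hK.exists_isMaxOn ⟨x₀, subset_closure hx₀⟩
    continuous_norm.continuousOn
  have hpmax : ∀ x ∈ closure Ω, ‖x‖ ≤ ‖p‖ := fun x hx => hpmax' hx
  set M : ℝ := ‖p‖ with hMdef
  have hle : ∀ x ∈ Ω, ‖x‖ ≤ M := fun x hx => hpmax x (subset_closure hx)
  have hMpos : 0 < M := by
    obtain ⟨ε, hε, hball⟩ := Metric.isOpen_iff.mp hopen 0 h0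
    have hz : (ε/2) • (EuclideanSpace.single 0 (1:ℝ)) ∈ Ω := by
      apply hball
      rw [Metric.mem_ball, dist_zero_right, norm_smul, EuclideanSpace.norm_single]
      rw [Real.norm_eq_abs, abs_of_pos (by linarith : (0:ℝ) < ε/2)]
      simpa using by linarith
    have h2 := hle _ hz
    rw [norm_smul, EuclideanSpace.norm_single, Real.norm_eq_abs,
      abs_of_pos (by linarith : (0:ℝ) < ε/2)] at h2
    calc (0:ℝ) < ε/2 := by linarith
      _ ≤ M := by simpa using h2
  have hlt : ∀ x ∈ Ω, ‖x‖ < M := by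
    intro x hx
    rcases eq_or_ne x 0 with rfl | hx0
    · simpa using hMpos
    · obtain ⟨ε, hε, hball⟩ := Metric.isOpen_iff.mp hopen x hx
      have hxn : 0 < ‖x‖ := norm_pos_iff.mpr hx0
      have hx' : (1 + ε/(2*‖x‖)) • x ∈ Ω := by
        apply hball
        rw [Metric.mem_ball, dist_eq_norm]
        have h3 : (1 + ε/(2*‖x‖)) • x - x = (ε/(2*‖x‖)) • x := by
          rw [add_smul, one_smul]; abel
        rw [h3, norm_smul, Real.norm_eq_abs, abs_of_pos (by positivity : (0:ℝ) < ε/(2*‖x‖))]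
        rw [show ε/(2*‖x‖) * ‖x‖ = ε/2 by field_simp]
        linarith
      have h4 := hle _ hx'
      rw [norm_smul, Real.norm_eq_abs,
        abs_of_pos (by positivity : (0:ℝ) < 1 + ε/(2*‖x‖))] at h4
      have h5 : (1 + ε/(2*‖x‖)) * ‖x‖ = ‖x‖ + ε/2 := by field_simp
      rw [h5] at h4
      linarith
  have hpneg : -p ∈ closure Ω := by
    have h1 : Ω ⊆ (fun x : EuclideanSpace ℝ (Fin 2) => -x) ⁻¹' Ω := fun x hx => hbal x hx
    have h2 := closure_mono h1 hpK
    exact Continuous.closure_preimage_subset (continuous_neg) Ω h2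
  have hD : Metric.diam Ω = 2*M := by
    apply le_antisymm
    · apply Metric.diam_le_of_forall_dist_le (by positivity)
      intro x hx y hy
      calc dist x y = ‖x - y‖ := dist_eq_norm x y
        _ ≤ ‖x‖ + ‖y‖ := norm_sub_le x y
        _ ≤ 2*M := by have := hle x hx; have := hle y hy; linarith
    · have h6 : dist p (-p) = 2*M := by
        rw [dist_eq_norm, sub_neg_eq_add, ← two_smul ℝ p, norm_smul]
        simp [hMdef]
      calc 2*M = dist p (-p) := h6.symm
        _ ≤ Metric.diam (closure Ω) := Metric.dist_le_diam_of_mem hbdd.closure hpK hpneg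
        _ = Metric.diam Ω := Metric.diam_closure Ω
  set e : EuclideanSpace ℝ (Fin 2) := M⁻¹ • p with hedef
  have he : ‖e‖ = 1 := by
    rw [hedef, norm_smul, Real.norm_eq_abs, abs_of_pos (by positivity : (0:ℝ) < M⁻¹)]
    field_simp
    exact hMdef.symm
  have hip : ⟪e, p⟫ = M := by
    rw [hedef, real_inner_smul_left, real_inner_self_eq_norm_sq, ← hMdef]
    field_simp
  have hseg : ∀ t : ℝ, |t| < 1 → t • p ∈ Ω := by
    have hpos : ∀ t : ℝ, 0 ≤ t → t < 1 → t • p ∈ Ω := by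
      intro t ht0 ht1
      have h := hconv.combo_interior_closure_mem_interior
        (x := 0) (y := p) (by rwa [hopen.interior_eq]) hpK
        (by linarith : (0:ℝ) < 1 - t) ht0 (by ring)
      rw [hopen.interior_eq] at h
      simpa using h
    intro t ht
    rcases le_or_gt 0 t with h | h
    · exact hpos t h (by rwa [abs_of_nonneg h] at ht)
    · have h7 := hpos (-t) (by linarith) (by rwa [abs_of_neg h] at ht)
      have := hbal _ h7
      simpa [neg_smul] using this
  have hinner : ∀ x ∈ Ω, |⟪e,x⟫| < M := by
    intro x hx
    calc |⟪e,x⟫| ≤ ‖e‖ * ‖x‖ := abs_real_inner_le_norm e x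
      _ = ‖x‖ := by rw [he, one_mul]
      _ < M := hlt x hx
  -- orthonormal basis extending e
  have hcard : Module.finrank ℝ (EuclideanSpace ℝ (Fin 2)) = Fintype.card (Fin 2) := by
    simp [finrank_euclideanSpace]
  have hortho : Orthonormal ℝ (({0} : Set (Fin 2)).restrict ![e, e]) := by
    constructor
    · rintro ⟨i, hi⟩
      rw [Set.mem_singleton_iff] at hi
      subst hi
      exact he
    · rintro ⟨i, hi⟩ ⟨j, hj⟩ hij
      rw [Set.mem_singleton_iff] at hi hj
      exact absurd (Subtype.ext (hi.trans hj.symm)) hij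
  obtain ⟨b, hb0⟩ := hortho.exists_orthonormalBasis_extension_of_card_eq hcard
  have hbe : b 0 = e := by simpa using hb0 0 (Set.mem_singleton 0)
  have hb1norm : ‖b 1‖ = 1 := b.orthonormal.1 1
  -- the coordinate map
  set T : EuclideanSpace ℝ (Fin 2) ≃ᵐ ℝ × ℝ :=
    b.measurableEquiv.trans ((MeasurableEquiv.toLp 2 (Fin 2 → ℝ)).symm.trans
      (MeasurableEquiv.finTwoArrow)) with hTdef
  have hT : MeasurePreserving T volume volume :=
    ((volume_preserving_finTwoArrow ℝ).comp
      (EuclideanSpace.volume_preserving_symm_measurableEquiv_toLp (Fin 2))).comp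
      b.measurePreserving_measurableEquiv
  have hTapp : ∀ x, T x = (⟪e, x⟫, ⟪b 1, x⟫) := by
    intro x
    have : T x = ((b.repr x : EuclideanSpace ℝ (Fin 2)) 0, (b.repr x : EuclideanSpace ℝ (Fin 2)) 1) := rfl
    rw [this, b.repr_apply_apply, b.repr_apply_apply, hbe]
  set Ω₂ : Set (ℝ × ℝ) := T '' Ω with hΩ₂def
  have hΩ₂meas : MeasurableSet Ω₂ := T.measurableEmbedding.measurableSet_image.mpr
    hopen.measurableSet
  have hmemΩ₂ : ∀ z ∈ Ω₂, |z.1| < M ∧ |z.2| < M := by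
    rintro z ⟨x, hx, rfl⟩
    rw [hTapp x]
    refine ⟨hinner x hx, ?_⟩
    calc |⟪b 1, x⟫| ≤ ‖b 1‖ * ‖x‖ := abs_real_inner_le_norm _ _
      _ = ‖x‖ := by rw [hb1norm, one_mul]
      _ < M := hlt x hx
  have hΩ₂conv : Convex ℝ Ω₂ := by
    have himg : Ω₂ = ((innerSL ℝ e).prod (innerSL ℝ (b 1))).toLinearMap '' Ω := by
      rw [hΩ₂def]
      exact Set.image_congr fun x _ => hTapp x
    rw [himg]
    exact hconv.linear_image _
  -- slices
  set S : ℝ → Set ℝ := fun s => Prod.mk s ⁻¹' Ω₂ with hSdef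
  have hSbdd : ∀ s, ∀ t ∈ S s, |t| < M := fun s t ht => (hmemΩ₂ (s, t) ht).2
  have hSconv : ∀ s, Convex ℝ (S s) := by
    intro s t₁ h₁ t₂ h₂ a c ha hc hac
    have := hΩ₂conv h₁ h₂ ha hc hac
    have heq : a • ((s, t₁) : ℝ × ℝ) + c • ((s, t₂) : ℝ × ℝ) = (s, a • t₁ + c • t₂) := by
      rw [Prod.smul_mk, Prod.smul_mk, Prod.mk_add_mk]
      congr 1
      simp only [smul_eq_mul]
      linear_combination s * hac
    rwa [heq] at this
  have hSne : ∀ s ∈ Ioo (-M) M, (S s).Nonempty := by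
    intro s hs
    have habs : |s / M| < 1 := by
      rw [abs_div, abs_of_pos hMpos, div_lt_one hMpos]
      rw [abs_lt]
      exact ⟨hs.1, hs.2⟩
    have hx : (s / M) • p ∈ Ω := hseg _ habs
    refine ⟨⟪b 1, (s / M) • p⟫, ?_⟩
    have : ((s : ℝ), ⟪b 1, (s / M) • p⟫) = T ((s / M) • p) := by
      rw [hTapp]
      congr 1
      rw [real_inner_smul_right, hip]
      field_simp
    show ((s : ℝ), ⟪b 1, (s / M) • p⟫) ∈ Ω₂
    rw [this]
    exact Set.mem_image_of_mem _ hx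
  have hSempty : ∀ s : ℝ, s ∉ Ioo (-M) M → S s = ∅ := by
    intro s hs
    rw [Set.eq_empty_iff_forall_notMem]
    intro t ht
    have := (hmemΩ₂ (s, t) ht).1
    rw [abs_lt] at this
    exact hs ⟨this.1, this.2⟩
  -- the slice length function
  set A : ℝ → ℝ := fun s => (volume (S s)).toReal with hAdef
  have hAnn : ∀ s, 0 ≤ A s := fun s => ENNReal.toReal_nonneg
  have hA0 : ∀ s : ℝ, s ∉ Ioo (-M) M → A s = 0 := by
    intro s hs; rw [hAdef]; simp only; rw [hSempty s hs]; simp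
  have hAmeas : Measurable A := (measurable_measure_prodMk_left hΩ₂meas).ennreal_toReal
  have hAform : ∀ s ∈ Ioo (-M) M, A s = sSup (S s) - sInf (S s) := by
    intro s hs
    have hba : BddAbove (S s) := ⟨M, fun t ht => (abs_lt.mp (hSbdd s t ht)).2.le⟩
    have hbb : BddBelow (S s) := ⟨-M, fun t ht => (abs_lt.mp (hSbdd s t ht)).1.le⟩
    rw [hAdef]
    simp only
    rw [vol_convex (hSconv s) (hSne s hs) hba hbb, ENNReal.toReal_ofReal]
    exact sub_nonneg.mpr (csInf_le_csSup (hSne s hs) hbb hba)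
  have hAbd : ∀ s, A s ≤ 2*M := by
    intro s
    have hsub : S s ⊆ Icc (-M) M := fun t ht => (abs_le.mp (hSbdd s t ht).le)
    have h1 : volume (S s) ≤ ENNReal.ofReal (2*M) := by
      calc volume (S s) ≤ volume (Icc (-M) M) := measure_mono hsub
        _ = ENNReal.ofReal (M - (-M)) := Real.volume_Icc
        _ = ENNReal.ofReal (2*M) := by congr 1; ring
    calc A s ≤ (ENNReal.ofReal (2*M)).toReal :=
        ENNReal.toReal_mono ENNReal.ofReal_ne_top h1
      _ = 2*M := ENNReal.toReal_ofReal (by positivity)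
  have hconcA : ConcaveOn ℝ (Ioo (-M) M) A := by
    refine ⟨convex_Ioo _ _, ?_⟩
    intro s₁ hs₁ s₂ hs₂ a c ha hc hac
    rcases eq_or_lt_of_le ha with rfl | ha'
    · have hc1 : c = 1 := by linarith
      subst hc1; simp
    rcases eq_or_lt_of_le hc with rfl | hc'
    · have ha1 : a = 1 := by linarith
      subst ha1; simp
    simp only [smul_eq_mul]
    set u : ℝ := a * s₁ + c * s₂ with hu
    have huI : u ∈ Ioo (-M) M := by
      have := (convex_Ioo (-M) M) hs₁ hs₂ ha hc hac
      simpa [hu] using this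
    have hne₁ := hSne s₁ hs₁
    have hne₂ := hSne s₂ hs₂
    have hneu := hSne u huI
    have hba : ∀ s : ℝ, BddAbove (S s) := fun s => ⟨M, fun t ht => (abs_lt.mp (hSbdd s t ht)).2.le⟩
    have hbb : ∀ s : ℝ, BddBelow (S s) := fun s => ⟨-M, fun t ht => (abs_lt.mp (hSbdd s t ht)).1.le⟩
    have hcomb : ∀ t₁ ∈ S s₁, ∀ t₂ ∈ S s₂, a * t₁ + c * t₂ ∈ S u := by
      intro t₁ h₁ t₂ h₂
      have hz := hΩ₂conv h₁ h₂ ha hc hac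
      have heq : a • ((s₁, t₁) : ℝ × ℝ) + c • ((s₂, t₂) : ℝ × ℝ) = (u, a * t₁ + c * t₂) := by
        rw [Prod.smul_mk, Prod.smul_mk, Prod.mk_add_mk]
        rfl
      rwa [heq] at hz
    have key1 : a * sSup (S s₁) + c * sSup (S s₂) ≤ sSup (S u) := by
      refine le_of_forall_pos_le_add ?_
      intro ε hε
      obtain ⟨t₁, ht₁, ht₁'⟩ := exists_lt_of_lt_csSup hne₁
        (by linarith : sSup (S s₁) - ε < sSup (S s₁))
      obtain ⟨t₂, ht₂, ht₂'⟩ := exists_lt_of_lt_csSup hne₂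
        (by linarith : sSup (S s₂) - ε < sSup (S s₂))
      have hmem := hcomb t₁ ht₁ t₂ ht₂
      have hup : a * t₁ + c * t₂ ≤ sSup (S u) := le_csSup (hba u) hmem
      have e1 : a * (sSup (S s₁) - ε) ≤ a * t₁ := mul_le_mul_of_nonneg_left ht₁'.le ha
      have e2 : c * (sSup (S s₂) - ε) ≤ c * t₂ := mul_le_mul_of_nonneg_left ht₂'.le hc
      have e3 : a * ε + c * ε = ε := by rw [← add_mul, hac, one_mul]
      linarith
    have key2 : sInf (S u) ≤ a * sInf (S s₁) + c * sInf (S s₂) := by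
      refine le_of_forall_pos_le_add ?_
      intro ε hε
      obtain ⟨t₁, ht₁, ht₁'⟩ := exists_lt_of_csInf_lt hne₁
        (by linarith : sInf (S s₁) < sInf (S s₁) + ε)
      obtain ⟨t₂, ht₂, ht₂'⟩ := exists_lt_of_csInf_lt hne₂
        (by linarith : sInf (S s₂) < sInf (S s₂) + ε)
      have hmem := hcomb t₁ ht₁ t₂ ht₂
      have hlo : sInf (S u) ≤ a * t₁ + c * t₂ := csInf_le (hbb u) hmem
      have e1 : a * t₁ ≤ a * (sInf (S s₁) + ε) := mul_le_mul_of_nonneg_left ht₁'.le ha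
      have e2 : c * t₂ ≤ c * (sInf (S s₂) + ε) := mul_le_mul_of_nonneg_left ht₂'.le hc
      have e3 : a * ε + c * ε = ε := by rw [← add_mul, hac, one_mul]
      linarith
    rw [hAform s₁ hs₁, hAform s₂ hs₂, hAform u huI]
    nlinarith [key1, key2]
  -- Fubini reduction
  set ρ : ℝ := 2*π/M with hρdef
  have hπ := Real.pi_pos
  have hρpos : 0 < ρ := by rw [hρdef]; positivity
  have hVΩ₂ : volume Ω₂ < ⊤ := by
    have hbox : Ω₂ ⊆ Icc (-M) M ×ˢ Icc (-M) M := by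
      intro z hz
      obtain ⟨h1, h2⟩ := hmemΩ₂ z hz
      exact ⟨abs_le.mp h1.le, abs_le.mp h2.le⟩
    exact (((Metric.isBounded_Icc (-M) M).prod (Metric.isBounded_Icc (-M) M)).subset
      hbox).measure_lt_top
  have hIcos : IntegrableOn (fun z : ℝ × ℝ => Real.cos (ρ * z.1)) Ω₂ := by
    refine Integrable.mono' (g := fun _ => (1:ℝ))
      (integrableOn_const hVΩ₂.ne) ?_ ?_
    · exact (Real.continuous_cos.comp (continuous_const.mul continuous_fst)).aestronglyMeasurable
    · exact Filter.Eventually.of_forall fun z => by simpa using Real.abs_cos_le_one _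
  have step1 : ∫ x in Ω, Real.cos (ρ * ⟪e, x⟫) = ∫ z in Ω₂, Real.cos (ρ * z.1) := by
    rw [hΩ₂def, hT.setIntegral_image_emb T.measurableEmbedding (fun z => Real.cos (ρ * z.1)) Ω]
    exact setIntegral_congr_fun hopen.measurableSet (fun x hx => by rw [hTapp x])
  have step2 : ∫ z in Ω₂, Real.cos (ρ * z.1) = ∫ s : ℝ, Real.cos (ρ * s) * A s := by
    rw [← MeasureTheory.integral_indicator hΩ₂meas]
    have hind : Integrable (Ω₂.indicator fun z : ℝ × ℝ => Real.cos (ρ * z.1)) volume :=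
      (integrable_indicator_iff hΩ₂meas).mpr hIcos
    rw [Measure.volume_eq_prod] at hind ⊢
    rw [MeasureTheory.integral_prod _ hind]
    refine integral_congr_ae (Filter.Eventually.of_forall fun s => ?_)
    show (∫ t : ℝ, Ω₂.indicator (fun z : ℝ × ℝ => Real.cos (ρ * z.1)) (s, t))
      = Real.cos (ρ * s) * A s
    have heq : (fun t => Ω₂.indicator (fun z : ℝ × ℝ => Real.cos (ρ * z.1)) (s, t))
        = (S s).indicator (fun _ => Real.cos (ρ * s)) := by
      funext t
      by_cases h : (s, t) ∈ Ω₂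
      · rw [Set.indicator_of_mem h, Set.indicator_of_mem (show t ∈ S s from h)]
      · rw [Set.indicator_of_notMem h, Set.indicator_of_notMem (show t ∉ S s from h)]
    rw [heq, integral_indicator_const _ (measurable_prodMk_left hΩ₂meas)]
    rw [smul_eq_mul, mul_comm]
    rfl
  -- integrabilities
  have hIA : IntegrableOn A (Ioo 0 M) := by
    refine Integrable.mono' (g := fun _ => 2*M)
      (integrableOn_const measure_Ioo_lt_top.ne) hAmeas.aestronglyMeasurable.restrict ?_
    exact Filter.Eventually.of_forall fun s => by
      rw [Real.norm_eq_abs, abs_of_nonneg (hAnn s)]; exact hAbd s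
  have hIAneg : IntegrableOn (fun u => A (-u)) (Ioo 0 M) := by
    refine Integrable.mono' (g := fun _ => 2*M)
      (integrableOn_const measure_Ioo_lt_top.ne)
      ((hAmeas.comp measurable_neg).aestronglyMeasurable.restrict) ?_
    exact Filter.Eventually.of_forall fun s => by
      rw [Real.norm_eq_abs, abs_of_nonneg (hAnn (-s))]; exact hAbd (-s)
  have hconcA' : ConcaveOn ℝ (Ioo 0 M) A :=
    hconcA.subset (fun x hx => ⟨lt_trans (neg_neg_iff_pos.mpr hMpos) hx.1, hx.2⟩) (convex_Ioo _ _)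
  have hconcA'' : ConcaveOn ℝ (Ioo 0 M) (fun u => A (-u)) := by
    refine ⟨convex_Ioo _ _, ?_⟩
    intro x hx y hy a c ha hc hac
    have hx' : -x ∈ Ioo (-M) M := ⟨by linarith [hx.2], by linarith [hx.1, hMpos]⟩
    have hy' : -y ∈ Ioo (-M) M := ⟨by linarith [hy.2], by linarith [hy.1, hMpos]⟩
    have h := hconcA.2 hx' hy' ha hc hac
    have heq : a • (-x) + c • (-y) = -(a • x + c • y) := by
      simp only [smul_eq_mul, mul_neg]; ring
    rwa [heq] at h
  have hcore1 : ∫ s in Ioo 0 M, A s * Real.cos (2*π/M * s) ≤ 0 := core1d hMpos A hconcA' hIA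
  have hcore2 : ∫ s in Ioo 0 M, A (-s) * Real.cos (2*π/M * s) ≤ 0 :=
    core1d hMpos _ hconcA'' hIAneg
  have hfint : ∀ a c : ℝ, IntervalIntegrable (fun s => Real.cos (ρ*s) * A s) volume a c := by
    intro a c
    rw [intervalIntegrable_iff]
    refine Integrable.mono' (g := fun _ => 2*M)
      (integrableOn_const measure_Ioc_lt_top.ne) ?_ ?_
    · exact ((Real.continuous_cos.comp
        (continuous_const.mul continuous_id)).measurable.mul hAmeas).aestronglyMeasurable.restrict
    · refine Filter.Eventually.of_forall fun s => ?_
      rw [Real.norm_eq_abs, abs_mul]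
      calc |Real.cos (ρ*s)| * |A s| ≤ 1 * (2*M) :=
          mul_le_mul (Real.abs_cos_le_one _)
            (by rw [abs_of_nonneg (hAnn s)]; exact hAbd s) (abs_nonneg _) one_pos.le
        _ = 2*M := one_mul _
  have hsplit : ∫ s : ℝ, Real.cos (ρ * s) * A s
      = (∫ s in Ioo 0 M, A (-s) * Real.cos (2*π/M * s))
        + (∫ s in Ioo 0 M, A s * Real.cos (2*π/M * s)) := by
    rw [← setIntegral_eq_integral_of_forall_compl_eq_zero
      (s := Ioo (-M) M) (fun s hs => by rw [hA0 s hs, mul_zero])]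
    rw [← integral_Ioc_eq_integral_Ioo, ← integral_of_le (by linarith : -M ≤ M)]
    rw [← integral_add_adjacent_intervals (a := -M) (b := 0) (c := M) (hfint (-M) 0) (hfint 0 M)]
    congr 1
    · have hneg := intervalIntegral.integral_comp_neg (a := (0:ℝ)) (b := M)
        (fun s => Real.cos (ρ*s) * A s)
      rw [neg_zero] at hneg
      rw [← hneg]
      have : (fun x : ℝ => Real.cos (ρ * (-x)) * A (-x))
          = fun x : ℝ => A (-x) * Real.cos (2*π/M * x) := by
        funext x
        rw [mul_neg, Real.cos_neg, mul_comm, hρdef]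
      rw [this, integral_of_le (le_of_lt hMpos), integral_Ioc_eq_integral_Ioo]
    · rw [integral_of_le (le_of_lt hMpos), integral_Ioc_eq_integral_Ioo]
      refine setIntegral_congr_fun measurableSet_Ioo fun s _ => ?_
      rw [mul_comm, hρdef]
  -- the parametrized integral
  set G : ℝ → ℝ := fun τ => ∫ x in Ω, Real.cos (τ * ⟪e, x⟫) with hGdef
  have hGρ : G ρ ≤ 0 := by
    show ∫ x in Ω, Real.cos (ρ * ⟪e, x⟫) ≤ 0
    rw [step1, step2, hsplit]
    linarith
  have hGcont : Continuous G := by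
    refine continuous_of_dominated (bound := fun _ => (1:ℝ)) ?_ ?_ ?_ ?_
    · intro τ
      exact (Real.continuous_cos.comp
        (continuous_const.mul (Continuous.inner continuous_const continuous_id))).aestronglyMeasurable
    · intro τ
      exact Filter.Eventually.of_forall fun x => by simpa using Real.abs_cos_le_one _
    · exact integrableOn_const hbdd.measure_lt_top.ne
    · exact Filter.Eventually.of_forall fun x =>
        Real.continuous_cos.comp (continuous_id.mul continuous_const)
  have hG0 : 0 < G 0 := by
    show 0 < ∫ x in Ω, Real.cos (0 * ⟪e, x⟫)
    have : (fun x : EuclideanSpace ℝ (Fin 2) => Real.cos (0 * ⟪e, x⟫)) = fun _ => (1:ℝ) := by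
      funext x; rw [zero_mul, Real.cos_zero]
    rw [this, setIntegral_const, smul_eq_mul, mul_one]
    exact ENNReal.toReal_pos (hopen.measure_pos volume hneΩ).ne' hbdd.measure_lt_top.ne
  obtain ⟨t, htI, hGt⟩ := intermediate_value_Icc' (le_of_lt hρpos) hGcont.continuousOn
    (⟨hGρ, hG0.le⟩ : (0:ℝ) ∈ Icc (G ρ) (G 0))
  have ht0 : t ≠ 0 := by
    rintro rfl
    rw [hGt] at hG0
    exact lt_irrefl _ hG0
  refine ⟨t • e, ?_, ?_, ?_⟩
  · rw [norm_smul, he, mul_one, Real.norm_eq_abs]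
    exact abs_pos.mpr ht0
  · rw [norm_smul, he, mul_one, Real.norm_eq_abs, hD, abs_of_nonneg htI.1]
    calc t ≤ ρ := htI.2
      _ = 4*π/(2*M) := by rw [hρdef]; ring
  · rw [← hGt]
    show _ = ∫ x in Ω, Real.cos (t * ⟪e, x⟫)
    refine setIntegral_congr_fun hopen.measurableSet fun x hx => ?_
    rw [real_inner_smul_left]
end

section
/- Let F:ℝ→ℝ be continuous, 2π-periodic, with ∫₀^{2π} F(θ)dθ = 0. Define T(φ) = ∫₀^π F(θ+φ)sin(2θ)dθ and Q(φ) = ∫₀^π F(θ+φ)cos(2θ)dθ. Then there exists φ ∈ ℝ such that T(φ) = 0 and Q(φ) ≥ 0. -/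
open Real intervalIntegral

noncomputable def myA (F : ℝ → ℝ) (φ : ℝ) : ℝ := ∫ u in φ..(φ+π), F u * Real.sin (2*u)
noncomputable def myB (F : ℝ → ℝ) (φ : ℝ) : ℝ := ∫ u in φ..(φ+π), F u * Real.cos (2*u)
noncomputable def myT (F : ℝ → ℝ) (φ : ℝ) : ℝ :=
  Real.cos (2*φ) * myA F φ - Real.sin (2*φ) * myB F φ
noncomputable def myQ (F : ℝ → ℝ) (φ : ℝ) : ℝ :=
  Real.sin (2*φ) * myA F φ + Real.cos (2*φ) * myB F φ

lemma ftc_aux (g : ℝ → ℝ) (hg : Continuous g) (x : ℝ) :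
    HasDerivAt (fun y => ∫ u in (0:ℝ)..y, g u) (g x) x :=
  intervalIntegral.integral_hasDerivAt_right (hg.intervalIntegrable 0 x)
    (hg.stronglyMeasurableAtFilter _ _) hg.continuousAt

lemma slide_aux (g : ℝ → ℝ) (hg : Continuous g) (x : ℝ) :
    HasDerivAt (fun y => ∫ u in y..(y+π), g u) (g (x+π) - g x) x := by
  have h1 : ∀ y : ℝ, (∫ u in y..(y+π), g u)
      = (∫ u in (0:ℝ)..(y+π), g u) - ∫ u in (0:ℝ)..y, g u := by
    intro y
    rw [intervalIntegral.integral_interval_sub_left (hg.intervalIntegrable 0 (y+π))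
      (hg.intervalIntegrable 0 y)]
  have h2 : HasDerivAt (fun y : ℝ => ∫ u in (0:ℝ)..(y+π), g u) (g (x+π)) x := by
    have := (ftc_aux g hg (x+π)).comp x ((hasDerivAt_id x).add_const π)
    simpa [Function.comp_def] using this
  have h3 := h2.sub (ftc_aux g hg x)
  exact h3.congr_of_eventuallyEq (Filter.Eventually.of_forall h1)

lemma myA_deriv (F : ℝ → ℝ) (hcont : Continuous F) (x : ℝ) :
    HasDerivAt (myA F) ((F (x+π) - F x) * Real.sin (2*x)) x := by
  have hg : Continuous fun u => F u * Real.sin (2*u) := by fun_prop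
  have := slide_aux _ hg x
  convert this using 1
  · rfl
  rw [show 2*(x+π) = 2*x + 2*π by ring, Real.sin_add_two_pi]
  ring

lemma myB_deriv (F : ℝ → ℝ) (hcont : Continuous F) (x : ℝ) :
    HasDerivAt (myB F) ((F (x+π) - F x) * Real.cos (2*x)) x := by
  have hg : Continuous fun u => F u * Real.cos (2*u) := by fun_prop
  have := slide_aux _ hg x
  convert this using 1
  · rfl
  rw [show 2*(x+π) = 2*x + 2*π by ring, Real.cos_add_two_pi]
  ring

lemma cos2_deriv (x : ℝ) :
    HasDerivAt (fun y : ℝ => Real.cos (2*y)) (-2 * Real.sin (2*x)) x := by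
  have h : HasDerivAt (fun y : ℝ => Real.cos (2*y)) (-Real.sin (2*x) * (2*1)) x :=
    (Real.hasDerivAt_cos (2*x)).comp x ((hasDerivAt_id x).const_mul 2)
  convert h using 1
  ring

lemma sin2_deriv (x : ℝ) :
    HasDerivAt (fun y : ℝ => Real.sin (2*y)) (2 * Real.cos (2*x)) x := by
  have h : HasDerivAt (fun y : ℝ => Real.sin (2*y)) (Real.cos (2*x) * (2*1)) x :=
    (Real.hasDerivAt_sin (2*x)).comp x ((hasDerivAt_id x).const_mul 2)
  convert h using 1
  ring

lemma myT_deriv (F : ℝ → ℝ) (hcont : Continuous F) (x : ℝ) :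
    HasDerivAt (myT F) (-2 * myQ F x) x := by
  have h := ((cos2_deriv x).mul (myA_deriv F hcont x)).sub
    ((sin2_deriv x).mul (myB_deriv F hcont x))
  have heq : HasDerivAt (fun y => Real.cos (2*y) * myA F y - Real.sin (2*y) * myB F y)
      (-2 * myQ F x) x := by
    convert h using 1
    · rfl
    · rfl
    · rfl
    simp only [myQ]
    ring
  exact heq

lemma myQ_deriv (F : ℝ → ℝ) (hcont : Continuous F) (x : ℝ) :
    HasDerivAt (myQ F) (2 * myT F x + (F (x+π) - F x)) x := by
  have h := ((sin2_deriv x).mul (myA_deriv F hcont x)).add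
    ((cos2_deriv x).mul (myB_deriv F hcont x))
  have heq : HasDerivAt (fun y => Real.sin (2*y) * myA F y + Real.cos (2*y) * myB F y)
      (2 * myT F x + (F (x+π) - F x)) x := by
    convert h using 1
    · rfl
    · rfl
    · rfl
    simp only [myT]
    linear_combination (F x - F (x+π)) * Real.sin_sq_add_cos_sq (2*x)
  exact heq

lemma myT_eq (F : ℝ → ℝ) (hcont : Continuous F) (φ : ℝ) :
    (∫ θ in (0:ℝ)..π, F (θ + φ) * Real.sin (2*θ)) = myT F φ := by
  have h3 : (∫ θ in (0:ℝ)..π, F (θ + φ) * Real.sin (2*(θ+φ) - 2*φ))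
      = ∫ u in (0+φ)..(π+φ), F u * Real.sin (2*u - 2*φ) :=
    intervalIntegral.integral_comp_add_right (fun u => F u * Real.sin (2*u - 2*φ)) φ
  have h1 : (∫ θ in (0:ℝ)..π, F (θ + φ) * Real.sin (2*θ))
      = ∫ θ in (0:ℝ)..π, F (θ + φ) * Real.sin (2*(θ+φ) - 2*φ) := by
    apply intervalIntegral.integral_congr
    intro x _
    show F (x + φ) * Real.sin (2*x) = F (x + φ) * Real.sin (2*(x+φ) - 2*φ)
    rw [show 2*(x+φ) - 2*φ = 2*x by ring]
  rw [h1, h3]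
  have h2 : (∫ u in (0+φ)..(π+φ), F u * Real.sin (2*u - 2*φ))
      = ∫ u in φ..(φ+π), (Real.cos (2*φ) * (F u * Real.sin (2*u))
          - Real.sin (2*φ) * (F u * Real.cos (2*u))) := by
    rw [zero_add, add_comm π φ]
    apply intervalIntegral.integral_congr
    intro x _
    show F x * Real.sin (2*x - 2*φ)
        = Real.cos (2*φ) * (F x * Real.sin (2*x)) - Real.sin (2*φ) * (F x * Real.cos (2*x))
    rw [Real.sin_sub]
    ring
  rw [h2, intervalIntegral.integral_sub
    ((Continuous.intervalIntegrable (by fun_prop) _ _))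
    ((Continuous.intervalIntegrable (by fun_prop) _ _)),
    intervalIntegral.integral_const_mul, intervalIntegral.integral_const_mul]
  rfl

lemma myQ_eq (F : ℝ → ℝ) (hcont : Continuous F) (φ : ℝ) :
    (∫ θ in (0:ℝ)..π, F (θ + φ) * Real.cos (2*θ)) = myQ F φ := by
  have h3 : (∫ θ in (0:ℝ)..π, F (θ + φ) * Real.cos (2*(θ+φ) - 2*φ))
      = ∫ u in (0+φ)..(π+φ), F u * Real.cos (2*u - 2*φ) :=
    intervalIntegral.integral_comp_add_right (fun u => F u * Real.cos (2*u - 2*φ)) φ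
  have h1 : (∫ θ in (0:ℝ)..π, F (θ + φ) * Real.cos (2*θ))
      = ∫ θ in (0:ℝ)..π, F (θ + φ) * Real.cos (2*(θ+φ) - 2*φ) := by
    apply intervalIntegral.integral_congr
    intro x _
    show F (x + φ) * Real.cos (2*x) = F (x + φ) * Real.cos (2*(x+φ) - 2*φ)
    rw [show 2*(x+φ) - 2*φ = 2*x by ring]
  rw [h1, h3]
  have h2 : (∫ u in (0+φ)..(π+φ), F u * Real.cos (2*u - 2*φ))
      = ∫ u in φ..(φ+π), (Real.sin (2*φ) * (F u * Real.sin (2*u))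
          + Real.cos (2*φ) * (F u * Real.cos (2*u))) := by
    rw [zero_add, add_comm π φ]
    apply intervalIntegral.integral_congr
    intro x _
    show F x * Real.cos (2*x - 2*φ)
        = Real.sin (2*φ) * (F x * Real.sin (2*x)) + Real.cos (2*φ) * (F x * Real.cos (2*x))
    rw [Real.cos_sub]
    ring
  rw [h2, intervalIntegral.integral_add
    ((Continuous.intervalIntegrable (by fun_prop) _ _))
    ((Continuous.intervalIntegrable (by fun_prop) _ _)),
    intervalIntegral.integral_const_mul, intervalIntegral.integral_const_mul]
  rfl

lemma cross_aux (f q : ℝ → ℝ) (hf : ∀ x, HasDerivAt f (-2 * q x) x)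
    (a b : ℝ) (hab : a < b) (ha : 0 < f a) (hb : f b < 0) :
    ∃ s, f s = 0 ∧ 0 ≤ q s := by
  have hfc : Continuous f :=
    continuous_iff_continuousAt.2 fun x => (hf x).differentiableAt.continuousAt
  set S := {x | x ∈ Set.Icc a b ∧ f x ≤ 0} with hS
  have hSne : S.Nonempty := ⟨b, ⟨hab.le, le_rfl⟩, hb.le⟩
  have hSbdd : BddBelow S := ⟨a, fun x hx => hx.1.1⟩
  have hSclosed : IsClosed S := by
    have : S = Set.Icc a b ∩ f ⁻¹' Set.Iic 0 := rfl
    rw [this]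
    exact isClosed_Icc.inter (isClosed_Iic.preimage hfc)
  set s := sInf S with hs
  have hsmem : s ∈ S := hSclosed.csInf_mem hSne hSbdd
  have has : a < s := by
    rcases lt_or_eq_of_le hsmem.1.1 with h | h
    · exact h
    · exfalso; rw [← h] at hsmem; linarith [hsmem.2]
  have hpos : ∀ x, x ∈ Set.Ico a s → 0 < f x := by
    intro x hx
    by_contra hc
    push_neg at hc
    have hxS : x ∈ S := ⟨⟨hx.1, hx.2.le.trans hsmem.1.2⟩, hc⟩
    have := csInf_le hSbdd hxS
    linarith [hx.2]
  have hfs0 : f s = 0 := by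
    refine le_antisymm hsmem.2 ?_
    have h1 : Filter.Tendsto f (nhdsWithin s (Set.Iio s)) (nhds (f s)) :=
      (hfc.continuousAt).continuousWithinAt
    refine ge_of_tendsto h1 ?_
    filter_upwards [Ioo_mem_nhdsLT_of_mem ⟨has, le_refl s⟩] with x hx
    exact (hpos x ⟨hx.1.le, hx.2⟩).le
  refine ⟨s, hfs0, ?_⟩
  have hslope : Filter.Tendsto (slope f s) (nhdsWithin s (Set.Iio s)) (nhds (-2 * q s)) := by
    have h := hasDerivAt_iff_tendsto_slope.1 (hf s)
    exact h.mono_left (nhdsWithin_mono s fun x hx => ne_of_lt hx)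
  have hle : -2 * q s ≤ 0 := by
    refine le_of_tendsto hslope ?_
    filter_upwards [Ioo_mem_nhdsLT_of_mem ⟨has, le_refl s⟩] with x hx
    have hfx : 0 < f x := hpos x ⟨hx.1.le, hx.2⟩
    rw [slope_def_field, hfs0, sub_zero]
    exact div_nonpos_of_nonneg_of_nonpos hfx.le (sub_nonpos.2 hx.2.le)
  linarith

lemma zero_aux (f q : ℝ → ℝ) (hf : ∀ x, HasDerivAt f (-2 * q x) x)
    (h0 : ∀ x ∈ Set.Icc (0:ℝ) (2*π), f x = 0) : f π = 0 ∧ 0 ≤ q π := by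
  have hπ : π ∈ Set.Ioo (0:ℝ) (2*π) := ⟨pi_pos, by linarith [pi_pos]⟩
  have hev : f =ᶠ[nhds π] fun _ => (0:ℝ) := by
    filter_upwards [isOpen_Ioo.mem_nhds hπ] with x hx
    exact h0 x ⟨hx.1.le, hx.2.le⟩
  have h1 : HasDerivAt f 0 π := (hasDerivAt_const π (0:ℝ)).congr_of_eventuallyEq hev
  have h2 := (hf π).unique h1
  exact ⟨h0 π ⟨pi_pos.le, by linarith [pi_pos]⟩, by linarith⟩

theorem stmt_16 (F : ℝ → ℝ) (hcont : Continuous F)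
    (hper : ∀ θ, F (θ + 2 * π) = F θ)
    (hmean : ∫ θ in (0:ℝ)..(2 * π), F θ = 0) :
    ∃ φ : ℝ,
      (∫ θ in (0:ℝ)..π, F (θ + φ) * Real.sin (2 * θ)) = 0 ∧
        0 ≤ ∫ θ in (0:ℝ)..π, F (θ + φ) * Real.cos (2 * θ) := by
  have hTd : ∀ x, HasDerivAt (myT F) (-2 * myQ F x) x := myT_deriv F hcont
  have hQd : ∀ x, HasDerivAt (myQ F) (2 * myT F x + (F (x+π) - F x)) x := myQ_deriv F hcont
  have hTc : Continuous (myT F) :=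
    continuous_iff_continuousAt.2 fun x => (hTd x).differentiableAt.continuousAt
  have hper2 : Function.Periodic F (2*π) := hper
  -- Q is 2π-periodic (pointwise)
  have hQper : myQ F (2*π) = myQ F 0 := by
    rw [← myQ_eq F hcont (2*π), ← myQ_eq F hcont 0]
    apply intervalIntegral.integral_congr
    intro x _
    simp only [hper, add_zero]
  have hTper : ∀ x, myT F (x + 2*π) = myT F x := by
    intro x
    rw [← myT_eq F hcont (x + 2*π), ← myT_eq F hcont x]
    apply intervalIntegral.integral_congr
    intro t _
    simp only [← add_assoc, hper]
  -- ∫₀^{2π} T = 0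
  have hderint : (∫ x in (0:ℝ)..(2*π), (2 * myT F x + (F (x+π) - F x)))
      = myQ F (2*π) - myQ F 0 := by
    apply intervalIntegral.integral_eq_sub_of_hasDerivAt (fun x _ => hQd x)
    exact Continuous.intervalIntegrable (by fun_prop) _ _
  have hFshift : (∫ x in (0:ℝ)..(2*π), F (x+π)) = 0 := by
    rw [intervalIntegral.integral_comp_add_right F π, zero_add,
      show 2*π+π = π + 2*π by ring, hper2.intervalIntegral_add_eq π 0, zero_add, hmean]
  have hΔ : (∫ x in (0:ℝ)..(2*π), (F (x+π) - F x)) = 0 := by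
    rw [intervalIntegral.integral_sub (Continuous.intervalIntegrable (by fun_prop) _ _)
      (hcont.intervalIntegrable _ _), hFshift, hmean, sub_zero]
  have hTint : (∫ x in (0:ℝ)..(2*π), myT F x) = 0 := by
    have hsplit : (∫ x in (0:ℝ)..(2*π), (2 * myT F x + (F (x+π) - F x)))
        = (∫ x in (0:ℝ)..(2*π), 2 * myT F x) + ∫ x in (0:ℝ)..(2*π), (F (x+π) - F x) := by
      apply intervalIntegral.integral_add
      · exact Continuous.intervalIntegrable (by fun_prop) _ _
      · exact Continuous.intervalIntegrable (by fun_prop) _ _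
    rw [hsplit, hΔ, intervalIntegral.integral_const_mul, hQper] at hderint
    linarith
  by_cases hall : ∀ x ∈ Set.Icc (0:ℝ) (2*π), myT F x = 0
  · obtain ⟨h1, h2⟩ := zero_aux (myT F) (myQ F) hTd hall
    exact ⟨π, by rw [myT_eq F hcont]; exact h1, by rw [myQ_eq F hcont]; exact h2⟩
  · push_neg at hall
    obtain ⟨x₀, hx₀, hx₀ne⟩ := hall
    have h2π : (0:ℝ) < 2*π := by linarith [pi_pos]
    have hexpos : ∃ p ∈ Set.Icc (0:ℝ) (2*π), 0 < myT F p := by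
      by_contra hcp
      push_neg at hcp
      have hpos : 0 < ∫ x in (0:ℝ)..(2*π), -myT F x := by
        apply intervalIntegral.integral_pos h2π (hTc.neg.continuousOn)
        · intro x hx
          have := hcp x ⟨hx.1.le, hx.2⟩
          linarith [show (-myT F) x = -myT F x from rfl]
        · refine ⟨x₀, hx₀, ?_⟩
          have := hcp x₀ hx₀
          rcases lt_or_eq_of_le this with h | h
          · linarith [show (-myT F) x₀ = -myT F x₀ from rfl]
          · exact absurd h hx₀ne
      rw [intervalIntegral.integral_neg, hTint, neg_zero] at hpos
      exact lt_irrefl 0 hpos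
    have hexneg : ∃ n ∈ Set.Icc (0:ℝ) (2*π), myT F n < 0 := by
      by_contra hcn
      push_neg at hcn
      have hpos : 0 < ∫ x in (0:ℝ)..(2*π), myT F x := by
        apply intervalIntegral.integral_pos h2π (hTc.continuousOn)
        · intro x hx
          exact hcn x ⟨hx.1.le, hx.2⟩
        · refine ⟨x₀, hx₀, ?_⟩
          rcases lt_or_eq_of_le (hcn x₀ hx₀) with h | h
          · exact h
          · exact absurd h.symm hx₀ne
      rw [hTint] at hpos
      exact lt_irrefl 0 hpos
    obtain ⟨p, hp, hp0⟩ := hexpos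
    obtain ⟨n, hn, hn0⟩ := hexneg
    rcases lt_trichotomy p n with h | h | h
    · obtain ⟨s, h1, h2⟩ := cross_aux (myT F) (myQ F) hTd p n h hp0 hn0
      exact ⟨s, by rw [myT_eq F hcont]; exact h1, by rw [myQ_eq F hcont]; exact h2⟩
    · exfalso; rw [h] at hp0; linarith
    · have hn2 : myT F (n + 2*π) < 0 := by rw [hTper]; exact hn0
      have hle : p ≤ n + 2*π := by
        have := hp.2
        have := hn.1
        linarith
      rcases lt_or_eq_of_le hle with hlt | heq
      · obtain ⟨s, h1, h2⟩ := cross_aux (myT F) (myQ F) hTd p (n + 2*π) hlt hp0 hn2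
        exact ⟨s, by rw [myT_eq F hcont]; exact h1, by rw [myQ_eq F hcont]; exact h2⟩
      · exfalso; rw [heq] at hp0; linarith
end
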